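/- arXiv:math/9911102 — 5 statements merged into one kernel-verified Lean document; each statement's English description precedes it below -/
import Mathlib

section
/- Let a group Γ act on a set X, let x₀ ∈ X, and let ψ : Γ → (X → ℝ) be a family of functions such that (i) for all γ, γ' ∈ Γ the quantity ψ_γ(x) + ψ_{γ'}(γ·x) − ψ_{γ'γ}(x) is independent of x ∈ X, and (ii) ψ_γ(x₀) = 0 for all γ ∈ Γ. Then the function σ : Γ × Γ → U(1) defined by σ(γ₁,γ₂) = exp(i·ψ_{γ₁}(γ₂·x₀)) is a multiplier on Γ: it satisfies σ(γ,1) = σ(1,γ) = 1 for all γ ∈ Γ and the cocycle identity σ(γ₁,γ₂)·σ(γ₁γ₂,γ₃) = σ(γ₁,γ₂γ₃)·σ(γ₂,γ₃) for all γ₁,γ₂,γ₃ ∈ Γ. -/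
/-- Given a group action of `Γ` on `X`, a base point `x₀` and a
family `ψ : Γ → X → ℝ` such that `ψ_γ(x) + ψ_{γ'}(γ·x) − ψ_{γ'γ}(x)` is
independent of `x` and `ψ_γ(x₀) = 0`, the function
`σ(γ₁,γ₂) = exp(i ψ_{γ₁}(γ₂·x₀))` is a multiplier on `Γ`: it takes values in
`U(1)`, is normalized, and satisfies the cocycle identity. -/
theorem exp_psi_is_multiplier
    {Γ X : Type*} [Group Γ] [MulAction Γ X] (x₀ : X) (ψ : Γ → X → ℝ)
    (h1 : ∀ (γ γ' : Γ) (x y : X),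
      ψ γ x + ψ γ' (γ • x) - ψ (γ' * γ) x
        = ψ γ y + ψ γ' (γ • y) - ψ (γ' * γ) y)
    (h2 : ∀ γ : Γ, ψ γ x₀ = 0) :
    letI σ : Γ → Γ → ℂ :=
      fun γ₁ γ₂ => Complex.exp (Complex.I * (ψ γ₁ (γ₂ • x₀) : ℂ))
    (∀ γ δ : Γ, ‖σ γ δ‖ = 1) ∧
    (∀ γ : Γ, σ γ 1 = 1 ∧ σ 1 γ = 1) ∧
    (∀ γ₁ γ₂ γ₃ : Γ,
      σ γ₁ γ₂ * σ (γ₁ * γ₂) γ₃ = σ γ₁ (γ₂ * γ₃) * σ γ₂ γ₃) := by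
  refine ⟨?_, ?_, ?_⟩
  · intro γ δ
    simp [Complex.norm_exp]
  · intro γ
    constructor
    · simp [h2]
    · have hψ1 : ψ 1 (γ • x₀) = 0 := by
        have := h1 1 1 (γ • x₀) x₀
        simpa [h2] using this
      simp [hψ1]
  · intro γ₁ γ₂ γ₃
    rw [← Complex.exp_add, ← Complex.exp_add]
    congr 1
    rw [← mul_add, ← mul_add]
    congr 1
    have h := h1 γ₂ γ₁ (γ₃ • x₀) x₀
    simp only [h2, add_zero, zero_add, sub_zero] at h
    have hr : ψ γ₁ (γ₂ • x₀) + ψ (γ₁ * γ₂) (γ₃ • x₀)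
        = ψ γ₁ ((γ₂ * γ₃) • x₀) + ψ γ₂ (γ₃ • x₀) := by
      rw [mul_smul]; linarith
    exact_mod_cast hr
end

section
/- Let Γ be a discrete group, σ a multiplier on Γ, and let v₁, …, v_N be an orthonormal family in ℓ²(Γ) whose linear span V is invariant under the left σ-regular operators L^σ_γ for every γ ∈ Γ. Then the function γ' ↦ Σ_{j=1}^N |v_j(γ')|² on Γ is constant; that is, for all γ', δ' ∈ Γ, Σ_{j=1}^N |v_j(γ')|² = Σ_{j=1}^N |v_j(δ')|². -/
open scoped ComplexConjugate

/-- If `v₁, …, v_N` is an orthonormal family in `ℓ²(Γ)` whose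
linear span is invariant under all the left `σ`-regular operators `L^σ_γ`,
then the function `γ' ↦ Σ_j |v_j(γ')|²` is constant on `Γ`. -/
theorem sum_sq_of_invariant_orthonormal_family_constant
    {Γ : Type*} [Group Γ] (σ : Γ → Γ → ℂ)
    (hnorm : ∀ γ δ : Γ, ‖σ γ δ‖ = 1)
    (hone : ∀ γ : Γ, σ γ 1 = 1 ∧ σ 1 γ = 1)
    (hcoc : ∀ γ₁ γ₂ γ₃ : Γ,
      σ γ₁ γ₂ * σ (γ₁ * γ₂) γ₃ = σ γ₁ (γ₂ * γ₃) * σ γ₂ γ₃)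
    (N : ℕ) (v : Fin N → lp (fun _ : Γ => ℂ) 2)
    (hON : Orthonormal ℂ v)
    (hInv : ∀ γ : Γ, ∀ f ∈ Submodule.span ℂ (Set.range v),
      ∃ g ∈ Submodule.span ℂ (Set.range v),
        ∀ x : Γ, (g : Γ → ℂ) x = f (γ⁻¹ * x) * σ γ (γ⁻¹ * x)) :
    ∀ γ' δ' : Γ,
      ∑ j : Fin N, ‖(v j : Γ → ℂ) γ'‖ ^ 2
        = ∑ j : Fin N, ‖(v j : Γ → ℂ) δ'‖ ^ 2 := by
  -- helper: conj z * z = ‖z‖² as a complex number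
  have hcz : ∀ z : ℂ, conj z * z = ((‖z‖ : ℂ)) ^ 2 := by
    intro z
    rw [mul_comm, Complex.mul_conj]
    norm_cast
    simp [Complex.normSq_eq_norm_sq]
  intro γ' δ'
  set γ : Γ := γ' * δ'⁻¹ with hγdef
  have hγ : γ⁻¹ * γ' = δ' := by rw [hγdef, mul_inv_rev]; simp [mul_assoc]
  choose w hwmem hwx using fun j => hInv γ (v j) (Submodule.subset_span ⟨j, rfl⟩)
  -- inner products preserved
  have hwv : ∀ i j, (inner ℂ (w i) (w j) : ℂ) = inner ℂ (v i) (v j) := by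
    intro i j
    rw [lp.inner_eq_tsum, lp.inner_eq_tsum]
    have : ∀ x : Γ, (inner ℂ ((w i : Γ → ℂ) x) ((w j : Γ → ℂ) x) : ℂ)
        = inner ℂ ((v i : Γ → ℂ) (γ⁻¹ * x)) ((v j : Γ → ℂ) (γ⁻¹ * x)) := by
      intro x
      rw [hwx i x, hwx j x]
      simp only [RCLike.inner_apply, map_mul]
      have h1 : conj (σ γ (γ⁻¹ * x)) * σ γ (γ⁻¹ * x) = 1 := by
        rw [hcz, hnorm]; norm_num
      linear_combination ((v j : Γ → ℂ) (γ⁻¹ * x) * conj ((v i : Γ → ℂ) (γ⁻¹ * x))) * h1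
    rw [tsum_congr this]
    exact (Equiv.mulLeft γ⁻¹).tsum_eq
      (fun y => (inner ℂ ((v i : Γ → ℂ) y) ((v j : Γ → ℂ) y) : ℂ))
  have hONw : Orthonormal ℂ w := by
    rw [orthonormal_iff_ite]
    intro i j
    rw [hwv]
    exact orthonormal_iff_ite.mp hON i j
  -- coefficients
  choose c hc using fun j => (Submodule.mem_span_range_iff_exists_fun ℂ).mp (hwmem j)
  -- inner products in terms of coefficients
  have hinner : ∀ i j, (inner ℂ (w i) (w j) : ℂ)
      = ∑ k : Fin N, conj (c i k) * c j k := by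
    intro i j
    rw [← hc i, ← hc j, sum_inner, Finset.sum_congr rfl]
    intro k _
    rw [inner_sum]
    simp only [inner_smul_left, inner_smul_right, orthonormal_iff_ite.mp hON,
      mul_ite, mul_one, mul_zero, Finset.sum_ite_eq, Finset.mem_univ, if_true]
    ring
  -- the matrix of conjugate coefficients is unitary
  set A : Matrix (Fin N) (Fin N) ℂ := Matrix.of fun i k => conj (c i k) with hA
  have hAAH : A * A.conjTranspose = 1 := by
    ext i j
    simp only [Matrix.mul_apply, Matrix.conjTranspose_apply, Matrix.one_apply, hA,
      Matrix.of_apply, RingHomCompTriple.comp_apply, RCLike.star_def, Complex.conj_conj,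
      RingHom.id_apply]
    rw [← hinner i j, hwv, orthonormal_iff_ite.mp hON i j]
  have hAHA : A.conjTranspose * A = 1 := mul_eq_one_comm.mp hAAH
  have hcol : ∀ k l : Fin N, ∑ j : Fin N, conj (c j k) * c j l
      = if k = l then 1 else 0 := by
    intro k l
    have := congrFun (congrFun hAHA k) l
    simp only [Matrix.mul_apply, Matrix.conjTranspose_apply, Matrix.one_apply, hA,
      Matrix.of_apply, RCLike.star_def, Complex.conj_conj] at this
    have h2 := congrArg conj this
    simpa [Finset.mul_sum, map_sum, mul_comm, apply_ite conj] using h2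
  -- pointwise evaluation
  have heval : ∀ j (x : Γ), (w j : Γ → ℂ) x = ∑ k : Fin N, c j k * (v k : Γ → ℂ) x := by
    intro j x
    rw [← hc j]
    rw [lp.coeFn_sum]
    simp [lp.coeFn_smul]
  -- pointwise sum of squares preserved
  have hpt : ∀ x : Γ, ∑ j : Fin N, ‖(w j : Γ → ℂ) x‖ ^ 2
      = ∑ k : Fin N, ‖(v k : Γ → ℂ) x‖ ^ 2 := by
    intro x
    have key : ∑ j : Fin N, conj ((w j : Γ → ℂ) x) * (w j : Γ → ℂ) x
        = ∑ k : Fin N, conj ((v k : Γ → ℂ) x) * (v k : Γ → ℂ) x := by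
      calc ∑ j : Fin N, conj ((w j : Γ → ℂ) x) * (w j : Γ → ℂ) x
          = ∑ j : Fin N, ∑ k : Fin N, ∑ l : Fin N,
              (conj (c j k) * c j l) * (conj ((v k : Γ → ℂ) x) * (v l : Γ → ℂ) x) := by
            refine Finset.sum_congr rfl fun j _ => ?_
            rw [heval j x, map_sum, Finset.sum_mul_sum]
            refine Finset.sum_congr rfl fun k _ => Finset.sum_congr rfl fun l _ => ?_
            rw [map_mul]; ring
        _ = ∑ k : Fin N, ∑ l : Fin N, (∑ j : Fin N, conj (c j k) * c j l) *
              (conj ((v k : Γ → ℂ) x) * (v l : Γ → ℂ) x) := by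
            rw [Finset.sum_comm]
            refine Finset.sum_congr rfl fun k _ => ?_
            rw [Finset.sum_comm]
            refine Finset.sum_congr rfl fun l _ => ?_
            rw [Finset.sum_mul]
        _ = ∑ k : Fin N, conj ((v k : Γ → ℂ) x) * (v k : Γ → ℂ) x := by
            refine Finset.sum_congr rfl fun k _ => ?_
            simp [hcol]
    have hL : ∑ j : Fin N, conj ((w j : Γ → ℂ) x) * (w j : Γ → ℂ) x
        = ((∑ j : Fin N, ‖(w j : Γ → ℂ) x‖ ^ 2 : ℝ) : ℂ) := by
      push_cast
      exact Finset.sum_congr rfl fun j _ => hcz _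
    have hR : ∑ k : Fin N, conj ((v k : Γ → ℂ) x) * (v k : Γ → ℂ) x
        = ((∑ k : Fin N, ‖(v k : Γ → ℂ) x‖ ^ 2 : ℝ) : ℂ) := by
      push_cast
      exact Finset.sum_congr rfl fun k _ => hcz _
    exact Complex.ofReal_inj.mp ((hL.symm.trans key).trans hR)
  -- w evaluated at γ' gives v at δ'
  have hw' : ∀ j, ‖(w j : Γ → ℂ) γ'‖ ^ 2 = ‖(v j : Γ → ℂ) δ'‖ ^ 2 := by
    intro j
    rw [hwx j γ', hγ, norm_mul, hnorm, mul_one]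
  calc ∑ j : Fin N, ‖(v j : Γ → ℂ) γ'‖ ^ 2
      = ∑ j : Fin N, ‖(w j : Γ → ℂ) γ'‖ ^ 2 := (hpt γ').symm
    _ = ∑ j : Fin N, ‖(v j : Γ → ℂ) δ'‖ ^ 2 := Finset.sum_congr rfl fun j _ => hw' j
end

section
/- Let Γ be an infinite discrete group and σ a multiplier on Γ. Every finite-dimensional subspace V of ℓ²(Γ) that is invariant under the left σ-regular operators L^σ_γ for all γ ∈ Γ is the zero subspace. Equivalently, every nonzero closed subspace of ℓ²(Γ) invariant under the left σ-regular representation is infinite dimensional. -/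
/-- For an infinite discrete group `Γ` and a multiplier `σ`,
every finite-dimensional subspace of `ℓ²(Γ)` invariant under all left
`σ`-regular operators `L^σ_γ` is the zero subspace. -/
theorem finiteDimensional_invariant_subspace_eq_bot
    {Γ : Type*} [Group Γ] [Infinite Γ] (σ : Γ → Γ → ℂ)
    (hnorm : ∀ γ δ : Γ, ‖σ γ δ‖ = 1)
    (hone : ∀ γ : Γ, σ γ 1 = 1 ∧ σ 1 γ = 1)
    (hcoc : ∀ γ₁ γ₂ γ₃ : Γ,
      σ γ₁ γ₂ * σ (γ₁ * γ₂) γ₃ = σ γ₁ (γ₂ * γ₃) * σ γ₂ γ₃)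
    (V : Submodule ℂ (lp (fun _ : Γ => ℂ) 2))
    (hfd : FiniteDimensional ℂ V)
    (hInv : ∀ γ : Γ, ∀ f ∈ V, ∃ g ∈ V,
      ∀ x : Γ, (g : Γ → ℂ) x = f (γ⁻¹ * x) * σ γ (γ⁻¹ * x)) :
    V = ⊥ := by
  classical
  by_contra hV
  obtain ⟨f₀, hf₀V, hf₀⟩ := Submodule.ne_bot_iff V |>.mp hV
  -- a point where f₀ is nonzero
  have hf₀fun : (f₀ : Γ → ℂ) ≠ 0 := fun h => hf₀ (lp.ext h)
  obtain ⟨x₀, hx₀⟩ : ∃ x₀, (f₀ : Γ → ℂ) x₀ ≠ 0 := by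
    by_contra h
    push_neg at h
    exact hf₀fun (funext h)
  -- evaluation linear maps on V
  let ev : Γ → (↥V →ₗ[ℂ] ℂ) := fun x =>
    { toFun := fun v => (v : Γ → ℂ) x
      map_add' := by intro a b; simp [lp.coeFn_add]
      map_smul' := by intro c a; simp [lp.coeFn_smul] }
  -- the kernels of finite families of evaluations
  let K : Finset Γ → Submodule ℂ ↥V := fun S => ⨅ x ∈ S, LinearMap.ker (ev x)
  -- pick a finite set S minimizing the rank of K S
  have hKmem : ∀ (S : Finset Γ) (v : ↥V), v ∈ K S ↔ ∀ x ∈ S, (v : Γ → ℂ) x = 0 := by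
    intro S v
    simp [K, Submodule.mem_iInf, LinearMap.mem_ker, ev, LinearMap.coe_mk, AddHom.coe_mk]
    exact Iff.rfl
  let nset : Set ℕ := {n | ∃ S : Finset Γ, Module.finrank ℂ (K S) = n}
  have hne : nset.Nonempty := ⟨_, ∅, rfl⟩
  obtain ⟨S, hS⟩ : ∃ S : Finset Γ, Module.finrank ℂ (K S) = sInf nset := Nat.sInf_mem hne
  -- S is norming for V : any element of V vanishing on S is 0
  have hSnorm : K S = ⊥ := by
    by_contra hKS
    obtain ⟨v, hvK, hv⟩ := Submodule.ne_bot_iff (K S) |>.mp hKS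
    have hvfun : ((v : lp (fun _ : Γ => ℂ) 2) : Γ → ℂ) ≠ 0 := by
      intro h
      apply hv
      ext1
      exact lp.ext h
    obtain ⟨y₀, hy₀⟩ : ∃ y₀, ((v : lp (fun _ : Γ => ℂ) 2) : Γ → ℂ) y₀ ≠ 0 := by
      by_contra h
      push_neg at h
      exact hvfun (funext h)
    have hlt : K (insert y₀ S) < K S := by
      refine lt_of_le_of_ne ?_ ?_
      · intro w hw
        rw [hKmem] at hw ⊢
        exact fun x hx => hw x (Finset.mem_insert_of_mem hx)
      · intro h
        have : v ∈ K (insert y₀ S) := h ▸ hvK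
        rw [hKmem] at this
        exact hy₀ (this y₀ (Finset.mem_insert_self _ _))
    have : Module.finrank ℂ (K (insert y₀ S)) < Module.finrank ℂ (K S) :=
      Submodule.finrank_lt_finrank_of_lt hlt
    have hmem : Module.finrank ℂ (K (insert y₀ S)) ∈ nset := ⟨_, rfl⟩
    have := Nat.sInf_le hmem
    omega
  -- the restriction map to S is injective on V, hence antilipschitz
  let E : ↥V →ₗ[ℂ] (↥(S : Finset Γ) → ℂ) := LinearMap.pi fun x : ↥(S : Finset Γ) => ev x
  have hEker : LinearMap.ker E = ⊥ := by
    rw [LinearMap.ker_eq_bot']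
    intro v hv
    have hvK : v ∈ K S := by
      rw [hKmem]
      intro x hx
      have := congrFun hv ⟨x, hx⟩
      simp [E, ev] at this
      exact this
    rw [hSnorm] at hvK
    exact hvK
  obtain ⟨C, hCpos, hC⟩ := E.exists_antilipschitzWith hEker
  -- bound : ‖v‖ ≤ C * ‖E v‖ for v ∈ V
  have hbound : ∀ v : ↥V, ‖v‖ ≤ C * ‖E v‖ := by
    intro v
    have := hC.le_mul_dist v 0
    simpa [E.map_zero, dist_zero_right] using this
  -- choose δ > 0 with C * δ < ‖f₀ x₀‖
  set a : ℝ := ‖(f₀ : Γ → ℂ) x₀‖ with ha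
  have hapos : 0 < a := norm_pos_iff.mpr hx₀
  set δ : ℝ := a / (2 * C) with hδ
  have hδpos : 0 < δ := div_pos hapos (by positivity)
  -- the set where ‖f₀‖ ≥ δ is finite
  have hsum : Summable fun y : Γ => ‖(f₀ : Γ → ℂ) y‖ ^ (2 : ℝ) := by
    have := lp.memℓp f₀
    exact this.summable (by norm_num)
  have htend : Filter.Tendsto (fun y : Γ => ‖(f₀ : Γ → ℂ) y‖ ^ (2 : ℝ))
      Filter.cofinite (nhds 0) := hsum.tendsto_cofinite_zero
  have hev : ∀ᶠ y in Filter.cofinite, ‖(f₀ : Γ → ℂ) y‖ ^ (2 : ℝ) < δ ^ (2 : ℝ) := by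
    refine htend.eventually (Filter.Tendsto.eventually_lt_const ?_ Filter.tendsto_id)
    · positivity
  have hTfin : {y : Γ | δ ≤ ‖(f₀ : Γ → ℂ) y‖}.Finite := by
    refine (Filter.eventually_cofinite.mp hev).subset ?_
    intro y hy
    simp only [Set.mem_setOf_eq, not_lt]
    exact Real.rpow_le_rpow hδpos.le hy (by norm_num)
  -- choose γ avoiding the "bad" finite set
  let T : Finset Γ := hTfin.toFinset
  let B : Finset Γ := (S ×ˢ T).image fun p => p.1 * p.2⁻¹
  obtain ⟨γ, hγ⟩ := Infinite.exists_notMem_finset B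
  have hγT : ∀ x ∈ S, ‖(f₀ : Γ → ℂ) (γ⁻¹ * x)‖ < δ := by
    intro x hx
    by_contra h
    push_neg at h
    have hmemT : γ⁻¹ * x ∈ T := by
      simp only [T, Set.Finite.mem_toFinset, Set.mem_setOf_eq]
      exact h
    apply hγ
    refine Finset.mem_image.mpr ⟨(x, γ⁻¹ * x), Finset.mem_product.mpr ⟨hx, hmemT⟩, ?_⟩
    group
  -- translate f₀ by γ
  obtain ⟨g, hgV, hg⟩ := hInv γ f₀ hf₀V
  -- g has the same value (in norm) at γ * x₀
  have hgval : ‖(g : Γ → ℂ) (γ * x₀)‖ = a := by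
    rw [hg, norm_mul]
    have : γ⁻¹ * (γ * x₀) = x₀ := by group
    rw [this, hnorm, mul_one]
  -- but g is small on S
  have hgS : ‖E (⟨g, hgV⟩ : ↥V)‖ ≤ δ := by
    refine pi_norm_le_iff_of_nonneg hδpos.le |>.mpr ?_
    rintro ⟨x, hx⟩
    have : E (⟨g, hgV⟩ : ↥V) ⟨x, hx⟩ = (g : Γ → ℂ) x := rfl
    rw [this, hg, norm_mul, hnorm, mul_one]
    exact (hγT x hx).le
  -- assemble the contradiction
  have h1 : a ≤ ‖(⟨g, hgV⟩ : ↥V)‖ := by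
    rw [← hgval]
    exact lp.norm_apply_le_norm (by norm_num) g (γ * x₀)
  have h2 : ‖(⟨g, hgV⟩ : ↥V)‖ ≤ C * δ :=
    (hbound _).trans (by
      have : (C : ℝ) ≥ 0 := C.2
      nlinarith [hgS])
  have hCδ : (C : ℝ) * δ = a / 2 := by
    rw [hδ]
    field_simp
  rw [hCδ] at h2
  linarith [h1.trans h2]
end

section
/- Let Γ be an infinite discrete group, σ a multiplier on Γ, and A a bounded linear operator on ℓ²(Γ) that commutes with the left σ-regular operators L^σ_γ for all γ ∈ Γ. Then for every complex number μ, the eigenspace ker(A − μ·I) is either the zero subspace or infinite dimensional. In particular, A has no eigenvalue of finite nonzero multiplicity (the discrete spectrum of such an operator is empty). -/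
/-- Let `Γ` be an infinite discrete group, `σ` a multiplier and
`A` a bounded operator on `ℓ²(Γ)` commuting with all the left `σ`-regular
unitaries `L^σ_γ` (here given as the isometric isomorphisms `U γ`, determined
by the usual formula). Then every eigenspace `ker (A − μ)` is either zero or
infinite dimensional; in particular `A` has empty discrete spectrum. -/
theorem eigenspace_of_commuting_operator_bot_or_infiniteDimensional
    {Γ : Type*} [Group Γ] [Infinite Γ] (σ : Γ → Γ → ℂ)
    (hnorm : ∀ γ δ : Γ, ‖σ γ δ‖ = 1)
    (hone : ∀ γ : Γ, σ γ 1 = 1 ∧ σ 1 γ = 1)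
    (hcoc : ∀ γ₁ γ₂ γ₃ : Γ,
      σ γ₁ γ₂ * σ (γ₁ * γ₂) γ₃ = σ γ₁ (γ₂ * γ₃) * σ γ₂ γ₃)
    (U : Γ → (lp (fun _ : Γ => ℂ) 2 ≃ₗᵢ[ℂ] lp (fun _ : Γ => ℂ) 2))
    (hU : ∀ (γ : Γ) (f : lp (fun _ : Γ => ℂ) 2) (x : Γ),
      (U γ f : Γ → ℂ) x = f (γ⁻¹ * x) * σ γ (γ⁻¹ * x))
    (A : lp (fun _ : Γ => ℂ) 2 →L[ℂ] lp (fun _ : Γ => ℂ) 2)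
    (hA : ∀ (γ : Γ) (f : lp (fun _ : Γ => ℂ) 2), A (U γ f) = U γ (A f)) :
    ∀ μ : ℂ,
      Module.End.eigenspace (A.toLinearMap : Module.End ℂ (lp (fun _ : Γ => ℂ) 2)) μ = ⊥ ∨
      ¬ FiniteDimensional ℂ
        (Module.End.eigenspace (A.toLinearMap : Module.End ℂ (lp (fun _ : Γ => ℂ) 2)) μ) := by
  classical
  intro μ
  set E := Module.End.eigenspace (A.toLinearMap : Module.End ℂ (lp (fun _ : Γ => ℂ) 2)) μ with hE
  rw [or_iff_not_imp_left]
  intro hne hfin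
  -- get a nonzero eigenvector
  obtain ⟨f, hfE, hf0⟩ := Submodule.exists_mem_ne_zero_of_ne_bot hne
  have hfeig : A f = μ • f := Module.End.mem_eigenspace_iff.mp hfE
  -- a point where f is nonzero
  have hfx : ∃ x₀ : Γ, (f : Γ → ℂ) x₀ ≠ 0 := by
    by_contra h
    push_neg at h
    exact hf0 (lp.ext (funext h))
  obtain ⟨x₀, hx₀⟩ := hfx
  -- the eigenspace is invariant under each U γ
  have hinv : ∀ γ : Γ, U γ f ∈ E := by
    intro γ
    rw [hE, Module.End.mem_eigenspace_iff]
    show A (U γ f) = μ • U γ f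
    rw [hA, hfeig, map_smul]
  -- orthonormal basis of the eigenspace
  let b := stdOrthonormalBasis ℂ E
  set n := Module.finrank ℂ E with hn
  -- the Bessel function h
  set h : Γ → ℝ := fun x => ∑ i : Fin n, ‖((b i : lp (fun _ : Γ => ℂ) 2) : Γ → ℂ) x‖ ^ 2
    with hh
  -- h is summable
  have hsummand : ∀ (v : lp (fun _ : Γ => ℂ) 2), Summable (fun x => ‖(v : Γ → ℂ) x‖ ^ 2) := by
    intro v
    have := lp.memℓp v
    rw [memℓp_gen_iff (by norm_num)] at this
    have h2 : ((2 : ENNReal).toReal) = ((2 : ℕ) : ℝ) := by norm_num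
    refine this.congr fun x => ?_
    rw [h2, Real.rpow_natCast]
  have hsum : Summable h := by
    apply summable_sum
    intro i _
    exact hsummand _
  -- coercion of finset sum in lp
  have hcoesum : ∀ (s : Finset (Fin n)) (g : Fin n → lp (fun _ : Γ => ℂ) 2) (x : Γ),
      ((s.sum g : lp (fun _ : Γ => ℂ) 2) : Γ → ℂ) x = ∑ i ∈ s, (g i : Γ → ℂ) x := by
    intro s g x
    induction s using Finset.induction with
    | empty => simp
    | insert a s hm ih => rw [Finset.sum_insert hm, lp.coeFn_add, Pi.add_apply, ih,
        Finset.sum_insert hm]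
  -- Bessel inequality pointwise: for g in E, |g x|² ≤ ‖g‖² h x
  have hbessel : ∀ (g : E) (x : Γ),
      ‖((g : lp (fun _ : Γ => ℂ) 2) : Γ → ℂ) x‖ ^ 2 ≤ ‖g‖ ^ 2 * h x := by
    intro g x
    have hrepr := b.sum_repr g
    -- coe to lp
    have hco : ((g : lp (fun _ : Γ => ℂ) 2) : Γ → ℂ) x
        = ∑ i : Fin n, b.repr g i * ((b i : lp (fun _ : Γ => ℂ) 2) : Γ → ℂ) x := by
      conv_lhs => rw [← hrepr]
      rw [Submodule.coe_sum, hcoesum]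
      refine Finset.sum_congr rfl fun i _ => ?_
      rw [Submodule.coe_smul, lp.coeFn_smul, Pi.smul_apply, smul_eq_mul]
    rw [hco]
    calc ‖∑ i : Fin n, b.repr g i * ((b i : lp (fun _ : Γ => ℂ) 2) : Γ → ℂ) x‖ ^ 2
        ≤ (∑ i : Fin n, ‖b.repr g i‖ * ‖((b i : lp (fun _ : Γ => ℂ) 2) : Γ → ℂ) x‖) ^ 2 := by
          apply pow_le_pow_left₀ (norm_nonneg _)
          exact (norm_sum_le _ _).trans (le_of_eq (Finset.sum_congr rfl fun i _ => norm_mul _ _))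
      _ ≤ (∑ i : Fin n, ‖b.repr g i‖ ^ 2) * ∑ i : Fin n, ‖((b i : lp (fun _ : Γ => ℂ) 2) : Γ → ℂ) x‖ ^ 2 :=
          Finset.sum_mul_sq_le_sq_mul_sq _ _ _
      _ = ‖g‖ ^ 2 * h x := by
          congr 1
          have h1 : ‖b.repr g‖ = ‖g‖ := b.repr.norm_map g
          have h2 := EuclideanSpace.norm_eq (b.repr g)
          rw [h1] at h2
          rw [← Real.sq_sqrt (Finset.sum_nonneg fun i _ => sq_nonneg _), ← h2]
  -- each U γ f gives a lower bound for h at γ * x₀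
  have hlow : ∀ γ : Γ, ‖(f : Γ → ℂ) x₀‖ ^ 2 ≤ ‖f‖ ^ 2 * h (γ * x₀) := by
    intro γ
    have hg : ‖((U γ f : lp (fun _ : Γ => ℂ) 2) : Γ → ℂ) (γ * x₀)‖ = ‖(f : Γ → ℂ) x₀‖ := by
      rw [hU, norm_mul, hnorm, mul_one]
      congr 2 <;> group
    have := hbessel ⟨U γ f, hinv γ⟩ (γ * x₀)
    have hnn : ‖(⟨U γ f, hinv γ⟩ : E)‖ = ‖f‖ := by
      show ‖U γ f‖ = ‖f‖
      exact (U γ).norm_map f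
    rw [hnn] at this
    calc ‖(f : Γ → ℂ) x₀‖ ^ 2
        = ‖((U γ f : lp (fun _ : Γ => ℂ) 2) : Γ → ℂ) (γ * x₀)‖ ^ 2 := by rw [hg]
      _ ≤ ‖f‖ ^ 2 * h (γ * x₀) := this
  -- set where h is large is finite, yet contains an infinite injective image
  have hfpos : 0 < ‖f‖ ^ 2 := pow_pos (norm_pos_iff.mpr hf0) 2
  set c : ℝ := ‖(f : Γ → ℂ) x₀‖ ^ 2 / ‖f‖ ^ 2 with hc
  have hcpos : 0 < c := div_pos (pow_pos (norm_pos_iff.mpr hx₀) 2) hfpos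
  have hmem : ∀ γ : Γ, c ≤ h (γ * x₀) := fun γ =>
    (div_le_iff₀ hfpos).mpr (by rw [mul_comm]; exact hlow γ)
  have hfin' : {x : Γ | c ≤ h x}.Finite := by
    have := hsum.tendsto_cofinite_zero
    have hev : ∀ᶠ x in Filter.cofinite, h x < c :=
      this (Iio_mem_nhds hcpos)
    have := hev
    rw [Filter.eventually_cofinite] at this
    exact this.subset fun x hx => not_lt.mpr hx
  have hinf : {x : Γ | c ≤ h x}.Infinite := by
    apply Set.infinite_of_injective_forall_mem (f := fun γ : Γ => γ * x₀)
    · intro a b hab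
      exact mul_right_cancel hab
    · exact hmem
  exact hinf hfin'
end

section
/- Let ν₁, …, νₙ be positive integers and let Λ = ℤ + Σ_{i=1}^n ℤ·(1/νᵢ) be the additive subgroup of ℝ generated by 1 and the 1/νᵢ. Suppose θ ∈ ℝ is irrational, θ' ∈ ℝ, and the subgroups ℤθ + Λ and ℤθ' + Λ of ℝ are equal. Then θ' is irrational, and either θ − θ' ∈ Λ or θ + θ' ∈ Λ. -/
/-- Let `Λ = ℤ + Σᵢ ℤ·(1/νᵢ) ⊆ ℝ`. If `θ` is irrational,
`θ' ∈ ℝ`, and `ℤθ + Λ = ℤθ' + Λ` as subsets of `ℝ`, then `θ'` is irrational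
and either `θ − θ' ∈ Λ` or `θ + θ' ∈ Λ`. -/
theorem trace_range_equality_forces_theta_relation
    (n : ℕ) (ν : Fin n → ℕ) (hν : ∀ i, 0 < ν i) (θ θ' : ℝ)
    (hθ : Irrational θ)
    (heq : {x : ℝ | ∃ (a b : ℤ) (c : Fin n → ℤ),
        x = a * θ + b + ∑ i, (c i : ℝ) / (ν i : ℝ)}
      = {x : ℝ | ∃ (a b : ℤ) (c : Fin n → ℤ),
        x = a * θ' + b + ∑ i, (c i : ℝ) / (ν i : ℝ)}) :
    Irrational θ' ∧
      ((∃ (b : ℤ) (c : Fin n → ℤ),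
          θ - θ' = b + ∑ i, (c i : ℝ) / (ν i : ℝ)) ∨
       (∃ (b : ℤ) (c : Fin n → ℤ),
          θ + θ' = b + ∑ i, (c i : ℝ) / (ν i : ℝ))) := by
  -- θ is in the left set, hence in the right set
  have hθmem : θ ∈ {x : ℝ | ∃ (a b : ℤ) (c : Fin n → ℤ),
      x = a * θ' + b + ∑ i, (c i : ℝ) / (ν i : ℝ)} := by
    rw [← heq]
    exact ⟨1, 0, fun _ => 0, by simp⟩
  have hθ'mem : θ' ∈ {x : ℝ | ∃ (a b : ℤ) (c : Fin n → ℤ),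
      x = a * θ + b + ∑ i, (c i : ℝ) / (ν i : ℝ)} := by
    rw [heq]
    exact ⟨1, 0, fun _ => 0, by simp⟩
  obtain ⟨a, b, c, h1⟩ := hθmem
  obtain ⟨a', b', c', h2⟩ := hθ'mem
  set q : ℚ := (b : ℚ) + ∑ i, (c i : ℚ) / (ν i : ℚ) with hq
  set q' : ℚ := (b' : ℚ) + ∑ i, (c' i : ℚ) / (ν i : ℚ) with hq'
  have hqc : (q : ℝ) = (b : ℝ) + ∑ i, (c i : ℝ) / (ν i : ℝ) := by
    rw [hq]; push_cast; ring
  have hq'c : (q' : ℝ) = (b' : ℝ) + ∑ i, (c' i : ℝ) / (ν i : ℝ) := by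
    rw [hq']; push_cast; ring
  have h1' : θ = a * θ' + (q : ℝ) := by rw [hqc]; linarith [h1]
  have h2' : θ' = a' * θ + (q' : ℝ) := by rw [hq'c]; linarith [h2]
  -- combine : (1 - a*a') * θ = a*q' + q
  have hcomb : ((1 - a * a' : ℤ) : ℝ) * θ = ((a * q' + q : ℚ) : ℝ) := by
    push_cast
    rw [h2'] at h1'
    nlinarith [h1']
  have haa' : a * a' = 1 := by
    by_contra h
    have h0 : (1 - a * a' : ℤ) ≠ 0 := by omega
    exact (hθ.intCast_mul h0) ⟨a * q' + q, hcomb.symm⟩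
  have ha : a = 1 ∧ a' = 1 ∨ a = -1 ∧ a' = -1 := Int.eq_one_or_neg_one_of_mul_eq_one' haa'
  constructor
  · rcases ha with ⟨ha, ha'⟩ | ⟨ha, ha'⟩
    · rw [h2', ha']; push_cast
      simpa using hθ.add_ratCast q'
    · rw [h2', ha']; push_cast
      have : Irrational (-θ + (q' : ℝ)) := hθ.neg.add_ratCast q'
      simpa using this
  · rcases ha with ⟨ha, ha'⟩ | ⟨ha, ha'⟩
    · left
      exact ⟨b, c, by rw [ha] at h1'; push_cast at h1'; rw [← hqc]; linarith [h1']⟩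
    · right
      exact ⟨b, c, by rw [ha] at h1'; push_cast at h1'; rw [← hqc]; linarith [h1']⟩
end
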